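/- The move H6 is derivable from the homotopy moves: for all words x, y, z, t and distinct letters A, B, C not occurring in them, the word xAByCAzCBt is homotopic to xBAyACzBCt. -/

import Mathlib

/-- A Gauss word: every letter that occurs, occurs exactly twice. -/
def IsGauss (w : List ℕ) : Prop := ∀ a ∈ w, w.count a = 2

/-- Rank of a word: the number of distinct letters occurring in it. -/
def rank (w : List ℕ) : ℕ := w.dedup.length

/-- Two words are isomorphic if one is obtained from the other by an
injective (hence bijective onto its image) relabeling of letters. -/
def Isomorphic (w₁ w₂ : List ℕ) : Prop :=
  ∃ f : ℕ → ℕ, Function.Injective f ∧ w₂ = w₁.map f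

/-- One step: an isomorphism or a homotopy move H1, H2, H3. -/
inductive Move : List ℕ → List ℕ → Prop
  | iso {w₁ w₂ : List ℕ} : Isomorphic w₁ w₂ → Move w₁ w₂
  | h1 (x y : List ℕ) (A : ℕ) (hA : A ∉ x ++ y) :
      Move (x ++ [A, A] ++ y) (x ++ y)
  | h2 (x y z : List ℕ) (A B : ℕ) (hAB : A ≠ B)
      (hA : A ∉ x ++ y ++ z) (hB : B ∉ x ++ y ++ z) :
      Move (x ++ [A, B] ++ y ++ [B, A] ++ z) (x ++ y ++ z)
  | h3 (x y z t : List ℕ) (A B C : ℕ)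
      (hAB : A ≠ B) (hAC : A ≠ C) (hBC : B ≠ C)
      (hA : A ∉ x ++ y ++ z ++ t) (hB : B ∉ x ++ y ++ z ++ t)
      (hC : C ∉ x ++ y ++ z ++ t) :
      Move (x ++ [A, B] ++ y ++ [A, C] ++ z ++ [B, C] ++ t)
           (x ++ [B, A] ++ y ++ [C, A] ++ z ++ [C, B] ++ t)

/-- Homotopy: the equivalence relation generated by isomorphisms and H1–H3. -/
def Homotopic : List ℕ → List ℕ → Prop := Relation.EqvGen Move

lemma le_foldr_max {l : List ℕ} {a : ℕ} (h : a ∈ l) : a ≤ l.foldr max 0 := by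
  induction l with
  | nil => simp at h
  | cons b l ih =>
    simp only [List.mem_cons] at h
    rcases h with h | h
    · subst h; exact le_max_left _ _
    · exact le_trans (ih h) (le_max_right _ _)

lemma map_self_of {f : ℕ → ℕ} {l : List ℕ} (h : ∀ a ∈ l, f a = a) : l.map f = l := by
  induction l with
  | nil => rfl
  | cons b l ih =>
    simp only [List.map_cons, h b (by simp), ih (fun a ha => h a (by simp [ha])),
      List.cons.injEq, and_self]

/-- H6 is derivable: xAByCAzCBt is homotopic to xBAyACzBCt. -/
theorem h6_derivable (x y z t : List ℕ) (A B C : ℕ)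
    (hAB : A ≠ B) (hAC : A ≠ C) (hBC : B ≠ C)
    (hA : A ∉ x ++ y ++ z ++ t) (hB : B ∉ x ++ y ++ z ++ t)
    (hC : C ∉ x ++ y ++ z ++ t) :
    Homotopic (x ++ [A, B] ++ y ++ [C, A] ++ z ++ [C, B] ++ t)
              (x ++ [B, A] ++ y ++ [A, C] ++ z ++ [B, C] ++ t) := by
  obtain ⟨S, hS⟩ : ∃ S, S = (x ++ y ++ z ++ t ++ [A, B, C]).foldr max 0 := ⟨_, rfl⟩
  obtain ⟨D, hD⟩ : ∃ D, D = S + 1 := ⟨_, rfl⟩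
  obtain ⟨E, hE⟩ : ∃ E, E = S + 2 := ⟨_, rfl⟩
  obtain ⟨F, hF⟩ : ∃ F, F = S + 3 := ⟨_, rfl⟩
  obtain ⟨G, hG⟩ : ∃ G, G = S + 4 := ⟨_, rfl⟩
  have hAS : A ≤ S := hS ▸ le_foldr_max (by simp)
  have hBS : B ≤ S := hS ▸ le_foldr_max (by simp)
  have hCS : C ≤ S := hS ▸ le_foldr_max (by simp)
  have hctx : ∀ a, a ∈ x ++ y ++ z ++ t → a ≤ S := by
    intro a ha
    exact hS ▸ le_foldr_max (by simp only [List.mem_append] at ha ⊢; tauto)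
  obtain ⟨hAx, hAy, hAz, hAt⟩ : A ∉ x ∧ A ∉ y ∧ A ∉ z ∧ A ∉ t := by
    simpa [List.mem_append, not_or] using hA
  obtain ⟨hBx, hBy, hBz, hBt⟩ : B ∉ x ∧ B ∉ y ∧ B ∉ z ∧ B ∉ t := by
    simpa [List.mem_append, not_or] using hB
  obtain ⟨hCx, hCy, hCz, hCt⟩ : C ∉ x ∧ C ∉ y ∧ C ∉ z ∧ C ∉ t := by
    simpa [List.mem_append, not_or] using hC
  have hfx : ∀ a, S < a → a ∉ x := fun a h ha => by
    have := hctx a (by simp [List.mem_append, ha]); omega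
  have hfy : ∀ a, S < a → a ∉ y := fun a h ha => by
    have := hctx a (by simp [List.mem_append, ha]); omega
  have hfz : ∀ a, S < a → a ∉ z := fun a h ha => by
    have := hctx a (by simp [List.mem_append, ha]); omega
  have hft : ∀ a, S < a → a ∉ t := fun a h ha => by
    have := hctx a (by simp [List.mem_append, ha]); omega
  have hDx := hfx D (by omega); have hDy := hfy D (by omega)
  have hDz := hfz D (by omega); have hDt := hft D (by omega)
  have hEx := hfx E (by omega); have hEy := hfy E (by omega)
  have hEz := hfz E (by omega); have hEt := hft E (by omega)
  have hFx := hfx F (by omega); have hFy := hfy F (by omega)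
  have hFz := hfz F (by omega); have hFt := hft F (by omega)
  have hGx := hfx G (by omega); have hGy := hfy G (by omega)
  have hGz := hfz G (by omega); have hGt := hft G (by omega)
  simp only [List.append_assoc, List.cons_append, List.nil_append]
  -- intermediate words
  set w0 : List ℕ := x ++ A :: B :: (y ++ C :: A :: (z ++ C :: B :: t)) with hw0
  set w1 : List ℕ := x ++ A :: B :: D :: E :: (y ++ E :: D :: C :: A :: (z ++ C :: B :: t)) with hw1
  set w2 : List ℕ := x ++ A :: B :: D :: F :: G :: E :: (y ++ E :: D :: C :: A :: (z ++ G :: F :: C :: B :: t)) with hw2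
  set w3 : List ℕ := x ++ A :: B :: F :: D :: G :: E :: (y ++ E :: C :: D :: A :: (z ++ G :: C :: F :: B :: t)) with hw3
  set w4 : List ℕ := x ++ A :: D :: G :: E :: (y ++ E :: C :: D :: A :: (z ++ G :: C :: t)) with hw4
  set w5 : List ℕ := x ++ G :: E :: (y ++ E :: C :: (z ++ G :: C :: t)) with hw5
  set w6 : List ℕ := x ++ B :: A :: (y ++ A :: C :: (z ++ B :: C :: t)) with hw6
  have m1 : Move w1 w0 := by
    have h := Move.h2 (x ++ [A, B]) y ([C, A] ++ z ++ [C, B] ++ t) D E (by omega)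
      (by
        simp only [List.mem_append, List.mem_cons, List.not_mem_nil]
        push_neg
        repeat' apply And.intro
        all_goals first | assumption | omega | exact not_false | trivial)
      (by
        simp only [List.mem_append, List.mem_cons, List.not_mem_nil]
        push_neg
        repeat' apply And.intro
        all_goals first | assumption | omega | exact not_false | trivial)
    simpa [List.append_assoc, hw0, hw1] using h
  have m2 : Move w2 w1 := by
    have h := Move.h2 (x ++ [A, B, D]) ([E] ++ y ++ [E, D, C, A] ++ z) ([C, B] ++ t) F G (by omega)
      (by
        simp only [List.mem_append, List.mem_cons, List.not_mem_nil]
        push_neg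
        repeat' apply And.intro
        all_goals first | assumption | omega | exact not_false | trivial)
      (by
        simp only [List.mem_append, List.mem_cons, List.not_mem_nil]
        push_neg
        repeat' apply And.intro
        all_goals first | assumption | omega | exact not_false | trivial)
    simpa [List.append_assoc] using h
  have m3 : Move w2 w3 := by
    have h := Move.h3 (x ++ [A, B]) ([G, E] ++ y ++ [E]) ([A] ++ z ++ [G]) ([B] ++ t) D F C
      (by omega) (by omega) (by omega)
      (by
        simp only [List.mem_append, List.mem_cons, List.not_mem_nil]
        push_neg
        repeat' apply And.intro
        all_goals first | assumption | omega | exact not_false | trivial)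
      (by
        simp only [List.mem_append, List.mem_cons, List.not_mem_nil]
        push_neg
        repeat' apply And.intro
        all_goals first | assumption | omega | exact not_false | trivial)
      (by
        simp only [List.mem_append, List.mem_cons, List.not_mem_nil]
        push_neg
        repeat' apply And.intro
        all_goals first | assumption | omega | exact not_false | trivial)
    simpa [List.append_assoc] using h
  have m4 : Move w3 w4 := by
    have h := Move.h2 (x ++ [A]) ([D, G, E] ++ y ++ [E, C, D, A] ++ z ++ [G, C]) t B F (by omega)
      (by
        simp only [List.mem_append, List.mem_cons, List.not_mem_nil]
        push_neg
        repeat' apply And.intro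
        all_goals first | assumption | omega | exact not_false | trivial)
      (by
        simp only [List.mem_append, List.mem_cons, List.not_mem_nil]
        push_neg
        repeat' apply And.intro
        all_goals first | assumption | omega | exact not_false | trivial)
    simpa [List.append_assoc] using h
  have m5 : Move w4 w5 := by
    have h := Move.h2 x ([G, E] ++ y ++ [E, C]) (z ++ [G, C] ++ t) A D (by omega)
      (by
        simp only [List.mem_append, List.mem_cons, List.not_mem_nil]
        push_neg
        repeat' apply And.intro
        all_goals first | assumption | omega | exact not_false | trivial)
      (by
        simp only [List.mem_append, List.mem_cons, List.not_mem_nil]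
        push_neg
        repeat' apply And.intro
        all_goals first | assumption | omega | exact not_false | trivial)
    simpa [List.append_assoc] using h
  have m6 : Move w5 w6 := by
    set g : Equiv.Perm ℕ := (Equiv.swap A E).trans (Equiv.swap B G) with hg
    have hgG : g G = B := by
      rw [hg]
      simp [Equiv.trans_apply, Equiv.swap_apply_of_ne_of_ne (by omega : G ≠ A) (by omega : G ≠ E),
        Equiv.swap_apply_right]
    have hgE : g E = A := by
      rw [hg]
      simp [Equiv.trans_apply, Equiv.swap_apply_right,
        Equiv.swap_apply_of_ne_of_ne (by omega : A ≠ B) (by omega : A ≠ G)]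
    have hgC : g C = C := by
      rw [hg]
      simp [Equiv.trans_apply, Equiv.swap_apply_of_ne_of_ne (by omega : C ≠ A) (by omega : C ≠ E),
        Equiv.swap_apply_of_ne_of_ne (by omega : C ≠ B) (by omega : C ≠ G)]
    have hgfix : ∀ a, a ≠ A → a ≠ E → a ≠ B → a ≠ G → g a = a := by
      intro a h1 h2 h3 h4
      rw [hg]
      simp [Equiv.trans_apply, Equiv.swap_apply_of_ne_of_ne h1 h2,
        Equiv.swap_apply_of_ne_of_ne h3 h4]
    have mx : x.map g = x := map_self_of fun a ha => hgfix a
      (fun h => hAx (h ▸ ha)) (fun h => hEx (h ▸ ha)) (fun h => hBx (h ▸ ha)) (fun h => hGx (h ▸ ha))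
    have my : y.map g = y := map_self_of fun a ha => hgfix a
      (fun h => hAy (h ▸ ha)) (fun h => hEy (h ▸ ha)) (fun h => hBy (h ▸ ha)) (fun h => hGy (h ▸ ha))
    have mz : z.map g = z := map_self_of fun a ha => hgfix a
      (fun h => hAz (h ▸ ha)) (fun h => hEz (h ▸ ha)) (fun h => hBz (h ▸ ha)) (fun h => hGz (h ▸ ha))
    have mt : t.map g = t := map_self_of fun a ha => hgfix a
      (fun h => hAt (h ▸ ha)) (fun h => hEt (h ▸ ha)) (fun h => hBt (h ▸ ha)) (fun h => hGt (h ▸ ha))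
    refine Move.iso ⟨g, g.injective, ?_⟩
    rw [hw5, hw6]
    simp [List.map_append, List.map_cons, mx, my, mz, mt, hgG, hgE, hgC]
  exact Relation.EqvGen.trans _ _ _ (Relation.EqvGen.symm _ _ (Relation.EqvGen.rel _ _ m1))
    (Relation.EqvGen.trans _ _ _ (Relation.EqvGen.symm _ _ (Relation.EqvGen.rel _ _ m2))
      (Relation.EqvGen.trans _ _ _ (Relation.EqvGen.rel _ _ m3)
        (Relation.EqvGen.trans _ _ _ (Relation.EqvGen.rel _ _ m4)
          (Relation.EqvGen.trans _ _ _ (Relation.EqvGen.rel _ _ m5)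
            (Relation.EqvGen.rel _ _ m6)))))
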